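/- Let F_d be an invertible n₂×n₂ matrix and consider F_ε = [[F_a, F_b],[F_c/ε, F_d/ε]]. For all sufficiently small ε > 0, sI - F_ε is invertible whenever s is not an eigenvalue of F₀ = F_a - F_b F_d^{-1} F_c, and the Schur complement formula gives H (sI - F_ε)^{-1} G + K = H₀(sI - F₀ + O(ε))^{-1} G₀ + K₀ + O(ε); in particular the leading-order expansion Φ_ε(s) = Φ₀(s) + O(ε) holds for each fixed such s. -/

import Mathlib

open Matrix

noncomputable section

private lemma diff_finset_prod {ι : Type*} {x : ℝ} (s : Finset ι) (f : ι → ℝ → ℂ)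
    (h : ∀ i ∈ s, DifferentiableAt ℝ (f i) x) :
    DifferentiableAt ℝ (fun t => ∏ i ∈ s, f i t) x := by
  classical
  induction s using Finset.induction_on with
  | empty => simpa using differentiableAt_const (1 : ℂ)
  | insert a s ha ih =>
    simp only [Finset.prod_insert ha]
    exact (h a (Finset.mem_insert_self _ _)).mul (ih fun i hi => h i (Finset.mem_insert_of_mem hi))

private lemma diff_mul_entries {k l p : ℕ} {x : ℝ}
    {A : ℝ → Matrix (Fin k) (Fin l) ℂ} {B : ℝ → Matrix (Fin l) (Fin p) ℂ}
    (hA : ∀ i j, DifferentiableAt ℝ (fun t => A t i j) x)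
    (hB : ∀ i j, DifferentiableAt ℝ (fun t => B t i j) x) :
    ∀ i j, DifferentiableAt ℝ (fun t => (A t * B t) i j) x := by
  intro i j
  simp only [Matrix.mul_apply]
  exact DifferentiableAt.fun_sum fun q _ => (hA i q).mul (hB q j)

private lemma diff_det {k : ℕ} {x : ℝ} {A : ℝ → Matrix (Fin k) (Fin k) ℂ}
    (hA : ∀ i j, DifferentiableAt ℝ (fun t => A t i j) x) :
    DifferentiableAt ℝ (fun t => (A t).det) x := by
  simp only [Matrix.det_apply']
  exact DifferentiableAt.fun_sum fun σ _ =>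
    (differentiableAt_const _).mul (diff_finset_prod _ _ fun i _ => hA (σ i) i)

private lemma diff_inv_entries {k : ℕ} {x : ℝ} {A : ℝ → Matrix (Fin k) (Fin k) ℂ}
    (hA : ∀ i j, DifferentiableAt ℝ (fun t => A t i j) x)
    (hdet : (A x).det ≠ 0) :
    ∀ i j, DifferentiableAt ℝ (fun t => (A t)⁻¹ i j) x := by
  intro i j
  have h1 : ∀ t, (A t)⁻¹ i j = ((A t).det)⁻¹ * (A t).adjugate i j := by
    intro t
    rw [Matrix.inv_def]
    simp [Matrix.smul_apply, Ring.inverse_eq_inv', smul_eq_mul]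
  simp only [h1, Matrix.adjugate_apply]
  refine ((diff_det hA).inv hdet).mul (diff_det fun i' j' => ?_)
  by_cases h : i' = j
  · simp only [Matrix.updateRow_apply, h, if_true]
    exact differentiableAt_const _
  · simp only [Matrix.updateRow_apply, h, if_false]
    exact hA i' j'

private lemma schur_alg {n₁ n₂ m : ℕ}
    (A : Matrix (Fin n₁) (Fin n₁) ℂ) (Fb : Matrix (Fin n₁) (Fin n₂) ℂ)
    (Fc : Matrix (Fin n₂) (Fin n₁) ℂ)
    (W Nm : Matrix (Fin n₂) (Fin n₂) ℂ) (Si : Matrix (Fin n₁) (Fin n₁) ℂ)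
    (Ga : Matrix (Fin n₁) (Fin m) ℂ) (Gb : Matrix (Fin n₂) (Fin m) ℂ)
    (Ha : Matrix (Fin m) (Fin n₁) ℂ) (Hb : Matrix (Fin m) (Fin n₂) ℂ)
    (K : Matrix (Fin m) (Fin m) ℂ)
    (e c : ℂ) (hc : c * e = 1)
    (hWN : W * Nm = 1) (hNW : Nm * W = 1)
    (hSmSi : (A - Fb * Nm * Fc) * Si = 1) :
    fromBlocks A (-Fb) (c • (-Fc)) (c • W) *
      fromBlocks Si (e • (Si * Fb * Nm)) (Nm * Fc * Si)
        (e • (Nm + Nm * Fc * Si * Fb * Nm)) = 1 ∧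
    fromCols Ha Hb *
      fromBlocks Si (e • (Si * Fb * Nm)) (Nm * Fc * Si)
        (e • (Nm + Nm * Fc * Si * Fb * Nm)) *
      fromRows Ga (c • Gb) + K
      = (Ha + Hb * Nm * Fc) * Si * (Ga + Fb * Nm * Gb) + (K + Hb * Nm * Gb) := by
  have hec : e * c = 1 := by rwa [mul_comm]
  constructor
  · rw [fromBlocks_multiply, ← fromBlocks_one, fromBlocks_inj]
    refine ⟨?_, ?_, ?_, ?_⟩
    · -- A * Si + (-Fb) * (Nm * Fc * Si) = 1
      have h : A * Si + (-Fb) * (Nm * Fc * Si) = (A - Fb * Nm * Fc) * Si := by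
        simp only [Matrix.sub_mul, Matrix.add_mul, Matrix.neg_mul, Matrix.mul_assoc,
          sub_eq_add_neg]
        try abel
      rw [h, hSmSi]
    · -- A * (e • (Si * Fb * Nm)) + (-Fb) * (e • (Nm + U)) = 0
      simp only [Matrix.mul_smul, ← smul_add]
      have h : A * (Si * Fb * Nm) + -Fb * (Nm + Nm * Fc * Si * Fb * Nm)
          = (A - Fb * Nm * Fc) * Si * (Fb * Nm) - Fb * Nm := by
        simp only [Matrix.sub_mul, Matrix.add_mul, Matrix.neg_mul, Matrix.mul_add,
          Matrix.mul_assoc, sub_eq_add_neg, neg_add]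
        try abel
      rw [h, hSmSi, Matrix.one_mul, sub_self, smul_zero]
    · -- (c • -Fc) * Si + (c • W) * (Nm * Fc * Si) = 0
      simp only [Matrix.smul_mul, ← smul_add]
      have h1 : Nm * Fc * Si = Nm * (Fc * Si) := Matrix.mul_assoc _ _ _
      rw [h1, ← Matrix.mul_assoc W Nm (Fc * Si), hWN, Matrix.one_mul]
      simp [Matrix.neg_mul]
    · -- (c • -Fc) * (e • (Si * Fb * Nm)) + (c • W) * (e • (Nm + U)) = 1
      simp only [Matrix.smul_mul, Matrix.mul_smul, smul_smul, hc, one_smul]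
      have h1 : Nm * Fc * Si * Fb * Nm = Nm * (Fc * Si * Fb * Nm) := by
        simp only [Matrix.mul_assoc]
      rw [Matrix.mul_add W, h1, ← Matrix.mul_assoc W Nm _, hWN, Matrix.one_mul]
      simp only [hec, one_smul, Matrix.neg_mul, Matrix.mul_assoc]
      abel
  · rw [fromCols_mul_fromBlocks, fromCols_mul_fromRows]
    simp only [Matrix.mul_smul, Matrix.smul_mul, Matrix.add_mul, Matrix.mul_add, smul_add,
      smul_smul, hc, hec, one_smul]
    simp only [Matrix.mul_assoc]
    abel

theorem stmt16 (n₁ n₂ m : ℕ)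
    (Fa : Matrix (Fin n₁) (Fin n₁) ℂ) (Fb : Matrix (Fin n₁) (Fin n₂) ℂ)
    (Fc : Matrix (Fin n₂) (Fin n₁) ℂ) (Fd : Matrix (Fin n₂) (Fin n₂) ℂ)
    (Ga : Matrix (Fin n₁) (Fin m) ℂ) (Gb : Matrix (Fin n₂) (Fin m) ℂ)
    (Ha : Matrix (Fin m) (Fin n₁) ℂ) (Hb : Matrix (Fin m) (Fin n₂) ℂ)
    (K : Matrix (Fin m) (Fin m) ℂ)
    (hFd : IsUnit Fd)
    (F₀ : Matrix (Fin n₁) (Fin n₁) ℂ) (hF₀ : F₀ = Fa - Fb * Fd⁻¹ * Fc)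
    (G₀ : Matrix (Fin n₁) (Fin m) ℂ) (hG₀ : G₀ = Ga - Fb * Fd⁻¹ * Gb)
    (H₀ : Matrix (Fin m) (Fin n₁) ℂ) (hH₀ : H₀ = Ha - Hb * Fd⁻¹ * Fc)
    (K₀ : Matrix (Fin m) (Fin m) ℂ) (hK₀ : K₀ = K - Hb * Fd⁻¹ * Gb)
    (Fε : ℝ → Matrix (Fin n₁ ⊕ Fin n₂) (Fin n₁ ⊕ Fin n₂) ℂ)
    (hFε : ∀ ε : ℝ, Fε ε = Matrix.fromBlocks Fa Fb ((ε⁻¹ : ℂ) • Fc) ((ε⁻¹ : ℂ) • Fd))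
    (Φ : ℝ → ℂ → Matrix (Fin m) (Fin m) ℂ)
    (hΦ : ∀ ε : ℝ, ∀ s : ℂ, Φ ε s =
      Matrix.fromCols Ha Hb *
        (s • (1 : Matrix (Fin n₁ ⊕ Fin n₂) (Fin n₁ ⊕ Fin n₂) ℂ) - Fε ε)⁻¹ *
        Matrix.fromRows Ga ((ε⁻¹ : ℂ) • Gb) + K)
    (Φ₀ : ℂ → Matrix (Fin m) (Fin m) ℂ)
    (hΦ₀ : ∀ s : ℂ, Φ₀ s =
      H₀ * (s • (1 : Matrix (Fin n₁) (Fin n₁) ℂ) - F₀)⁻¹ * G₀ + K₀)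
    (s : ℂ) (hs : IsUnit (s • (1 : Matrix (Fin n₁) (Fin n₁) ℂ) - F₀)) :
    ∃ C ε₀ : ℝ, 0 < C ∧ 0 < ε₀ ∧ ∀ ε : ℝ, 0 < ε → ε < ε₀ →
      IsUnit (s • (1 : Matrix (Fin n₁ ⊕ Fin n₂) (Fin n₁ ⊕ Fin n₂) ℂ) - Fε ε) ∧
      ∀ i j, ‖(Φ ε s - Φ₀ s) i j‖ ≤ C * ε := by
  classical
  -- basic definitions
  set Wf : ℝ → Matrix (Fin n₂) (Fin n₂) ℂ :=
    fun t => ((t : ℂ) * s) • (1 : Matrix (Fin n₂) (Fin n₂) ℂ) - Fd with hWf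
  set Nf : ℝ → Matrix (Fin n₂) (Fin n₂) ℂ := fun t => (Wf t)⁻¹ with hNf
  set Smf : ℝ → Matrix (Fin n₁) (Fin n₁) ℂ :=
    fun t => s • (1 : Matrix (Fin n₁) (Fin n₁) ℂ) - Fa - Fb * Nf t * Fc with hSmf
  set gf : ℝ → Matrix (Fin m) (Fin m) ℂ :=
    fun t => (Ha + Hb * Nf t * Fc) * (Smf t)⁻¹ * (Ga + Fb * Nf t * Gb)
      + (K + Hb * Nf t * Gb) with hgf
  -- determinants at 0
  have hFdDet : Fd.det ≠ 0 := ((Matrix.isUnit_iff_isUnit_det Fd).mp hFd).ne_zero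
  have hW0 : Wf 0 = -Fd := by simp [hWf]
  have hN0 : Nf 0 = -Fd⁻¹ := by
    rw [hNf]
    simp only [hW0]
    refine Matrix.inv_eq_right_inv ?_
    rw [neg_mul_neg]
    exact Matrix.mul_nonsing_inv Fd ((Matrix.isUnit_iff_isUnit_det Fd).mp hFd)
  have hdetW0 : (Wf 0).det ≠ 0 := by
    rw [hW0, Matrix.det_neg]
    exact mul_ne_zero (pow_ne_zero _ (by norm_num)) hFdDet
  have hSm0 : Smf 0 = s • (1 : Matrix (Fin n₁) (Fin n₁) ℂ) - F₀ := by
    rw [hSmf]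
    simp only [hN0, hF₀]
    simp only [Matrix.mul_neg, Matrix.neg_mul, sub_neg_eq_add]
    abel
  have hdetSm0 : (Smf 0).det ≠ 0 := by
    rw [hSm0]
    exact ((Matrix.isUnit_iff_isUnit_det _).mp hs).ne_zero
  -- entrywise differentiability at 0
  have hWent : ∀ i j, DifferentiableAt ℝ (fun t => Wf t i j) 0 := by
    intro i j
    simp only [hWf, Matrix.sub_apply, Matrix.smul_apply, smul_eq_mul]
    have hcoe : DifferentiableAt ℝ (fun t : ℝ => (t : ℂ)) 0 :=
      Complex.ofRealCLM.differentiableAt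
    exact ((hcoe.mul_const s).mul_const _).sub_const _
  have hNent : ∀ i j, DifferentiableAt ℝ (fun t => Nf t i j) 0 := by
    simpa only [hNf] using diff_inv_entries hWent hdetW0
  have hConstEnt : ∀ {a b : ℕ} (M : Matrix (Fin a) (Fin b) ℂ) (i : Fin a) (j : Fin b),
      DifferentiableAt ℝ (fun _ : ℝ => M i j) 0 := fun M i j => differentiableAt_const _
  have hSment : ∀ i j, DifferentiableAt ℝ (fun t => Smf t i j) 0 := by
    intro i j
    simp only [hSmf, Matrix.sub_apply]
    exact (differentiableAt_const _).sub
      (diff_mul_entries (diff_mul_entries (hConstEnt Fb) hNent) (hConstEnt Fc) i j)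
  have hSient : ∀ i j, DifferentiableAt ℝ (fun t => (Smf t)⁻¹ i j) 0 :=
    diff_inv_entries hSment hdetSm0
  have hgent : ∀ i j, DifferentiableAt ℝ (fun t => gf t i j) 0 := by
    intro i j
    simp only [hgf, Matrix.add_apply]
    have h1 : ∀ i j, DifferentiableAt ℝ (fun t => (Ha + Hb * Nf t * Fc) i j) 0 := by
      intro i j
      simp only [Matrix.add_apply]
      exact (differentiableAt_const _).add
        (diff_mul_entries (diff_mul_entries (hConstEnt Hb) hNent) (hConstEnt Fc) i j)
    have h2 : ∀ i j, DifferentiableAt ℝ (fun t => (Ga + Fb * Nf t * Gb) i j) 0 := by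
      intro i j
      simp only [Matrix.add_apply]
      exact (differentiableAt_const _).add
        (diff_mul_entries (diff_mul_entries (hConstEnt Fb) hNent) (hConstEnt Gb) i j)
    exact (diff_mul_entries (diff_mul_entries h1 hSient) h2 i j).add
      ((differentiableAt_const _).add
        (diff_mul_entries (diff_mul_entries (hConstEnt Hb) hNent) (hConstEnt Gb) i j))
  -- big-O bound from differentiability
  set G2 : ℝ → (Fin m × Fin m → ℂ) := fun t p => gf t p.1 p.2 with hG2
  have hG2diff : DifferentiableAt ℝ G2 0 :=
    differentiableAt_pi.mpr fun p => hgent p.1 p.2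
  obtain ⟨C0, hC0pos, hC0⟩ := hG2diff.isBigO_sub.exists_pos
  have hbound := hC0.bound
  -- eventual nonvanishing of determinants
  have hevW : ∀ᶠ t in nhds (0 : ℝ), (Wf t).det ≠ 0 :=
    (diff_det hWent).continuousAt.eventually_ne hdetW0
  have hevS : ∀ᶠ t in nhds (0 : ℝ), (Smf t).det ≠ 0 :=
    (diff_det hSment).continuousAt.eventually_ne hdetSm0
  obtain ⟨δ, hδpos, hδ⟩ := Metric.eventually_nhds_iff.mp (hbound.and (hevW.and hevS))
  refine ⟨C0, δ, hC0pos, hδpos, ?_⟩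
  intro ε hε hεδ
  have hεne : ε ≠ 0 := ne_of_gt hε
  have hdist : dist ε (0 : ℝ) < δ := by
    simpa [Real.dist_eq, abs_of_pos hε] using hεδ
  obtain ⟨hb, hdW, hdS⟩ := hδ hdist
  -- units
  have hWu : IsUnit (Wf ε).det := Ne.isUnit hdW
  have hSu : IsUnit (Smf ε).det := Ne.isUnit hdS
  have hWN : Wf ε * Nf ε = 1 := by rw [hNf]; exact Matrix.mul_nonsing_inv _ hWu
  have hNW : Nf ε * Wf ε = 1 := by rw [hNf]; exact Matrix.nonsing_inv_mul _ hWu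
  have hSmSi : Smf ε * (Smf ε)⁻¹ = 1 := Matrix.mul_nonsing_inv _ hSu
  -- scalar facts
  set e : ℂ := (ε : ℂ) with he
  set c : ℂ := (ε : ℂ)⁻¹ with hcdef
  have heps : (ε : ℂ) ≠ 0 := Complex.ofReal_ne_zero.mpr hεne
  have hc : c * e = 1 := inv_mul_cancel₀ heps
  -- block decomposition of s•1 - Fε ε
  have hM : s • (1 : Matrix (Fin n₁ ⊕ Fin n₂) (Fin n₁ ⊕ Fin n₂) ℂ) - Fε ε =
      fromBlocks (s • (1 : Matrix (Fin n₁) (Fin n₁) ℂ) - Fa) (-Fb) (c • (-Fc)) (c • Wf ε) := by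
    rw [hFε ε, ← Matrix.fromBlocks_one, Matrix.fromBlocks_smul]
    have hsub : ∀ (P P' : Matrix (Fin n₁) (Fin n₁) ℂ) (Q Q' : Matrix (Fin n₁) (Fin n₂) ℂ)
        (R R' : Matrix (Fin n₂) (Fin n₁) ℂ) (T T' : Matrix (Fin n₂) (Fin n₂) ℂ),
        fromBlocks P Q R T - fromBlocks P' Q' R' T' =
          fromBlocks (P - P') (Q - Q') (R - R') (T - T') := by
      intro P P' Q Q' R R' T T'
      simp [sub_eq_add_neg, Matrix.fromBlocks_neg, Matrix.fromBlocks_add]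
    rw [hsub, fromBlocks_inj]
    refine ⟨by simp, by simp, by simp [hcdef, smul_neg], ?_⟩
    have h2 : c • Wf ε = s • (1 : Matrix (Fin n₂) (Fin n₂) ℂ) - (ε : ℂ)⁻¹ • Fd := by
      rw [hWf, hcdef]
      show ((ε : ℂ))⁻¹ • (((ε : ℂ) * s) • (1 : Matrix (Fin n₂) (Fin n₂) ℂ) - Fd) = _
      rw [smul_sub, smul_smul, inv_mul_cancel_left₀ heps]
    rw [h2]
  -- Schur algebra
  have hSmeq : Smf ε = s • (1 : Matrix (Fin n₁) (Fin n₁) ℂ) - Fa - Fb * Nf ε * Fc := by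
    rw [hSmf]
  have key := schur_alg (s • (1 : Matrix (Fin n₁) (Fin n₁) ℂ) - Fa) Fb Fc (Wf ε) (Nf ε)
    ((Smf ε)⁻¹) Ga Gb Ha Hb K e c hc hWN hNW (by rw [← hSmeq]; exact hSmSi)
  have hMX : (s • (1 : Matrix (Fin n₁ ⊕ Fin n₂) (Fin n₁ ⊕ Fin n₂) ℂ) - Fε ε) *
      fromBlocks ((Smf ε)⁻¹) (e • ((Smf ε)⁻¹ * Fb * Nf ε)) (Nf ε * Fc * (Smf ε)⁻¹)
        (e • (Nf ε + Nf ε * Fc * (Smf ε)⁻¹ * Fb * Nf ε)) = 1 := by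
    rw [hM]; exact key.1
  refine ⟨(Matrix.isUnit_iff_isUnit_det _).mpr (Matrix.isUnit_det_of_right_inverse hMX), ?_⟩
  have hMinv := Matrix.inv_eq_right_inv hMX
  have hΦg : Φ ε s = gf ε := by
    rw [hΦ ε s, hMinv, hgf]
    exact key.2
  have hg0 : gf 0 = Φ₀ s := by
    rw [hgf]
    simp only [hN0, hSm0, hΦ₀ s, hH₀, hG₀, hK₀]
    simp [Matrix.mul_neg, Matrix.neg_mul, sub_eq_add_neg]
  intro i j
  have hent : (Φ ε s - Φ₀ s) i j = (G2 ε - G2 0) (i, j) := by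
    rw [hΦg, ← hg0]
    simp [hG2, Matrix.sub_apply]
  rw [hent]
  calc ‖(G2 ε - G2 0) (i, j)‖ ≤ ‖G2 ε - G2 0‖ := norm_le_pi_norm _ _
    _ ≤ C0 * ‖ε - 0‖ := hb
    _ = C0 * ε := by rw [sub_zero, Real.norm_eq_abs, abs_of_pos hε]
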